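/- For any permutation π of {1,...,n}, the number of inversions of π equals the excedance difference of π plus the number of inversions of the subword of excedance letters plus the number of inversions of the subword of non-excedance letters. -/

import Mathlib

open Finset

def exc {n : ℕ} (π : Equiv.Perm (Fin n)) : ℕ :=
  (univ.filter (fun i => i < π i)).card

def dexc {n : ℕ} (π : Equiv.Perm (Fin n)) : ℕ :=
  ∑ i ∈ univ.filter (fun i => i < π i), ((π i : ℕ) - (i : ℕ))

def inv {n : ℕ} (π : Equiv.Perm (Fin n)) : ℕ :=
  (univ.filter (fun p : Fin n × Fin n => p.1 < p.2 ∧ π p.2 < π p.1)).card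

/-- Inversions among the excedance letters (positions both excedances). -/
def invE {n : ℕ} (π : Equiv.Perm (Fin n)) : ℕ :=
  (univ.filter (fun p : Fin n × Fin n =>
    p.1 < p.2 ∧ p.1 < π p.1 ∧ p.2 < π p.2 ∧ π p.2 < π p.1)).card

/-- Inversions among the non-excedance letters. -/
def invNE {n : ℕ} (π : Equiv.Perm (Fin n)) : ℕ :=
  (univ.filter (fun p : Fin n × Fin n =>
    p.1 < p.2 ∧ π p.1 ≤ p.1 ∧ π p.2 ≤ p.2 ∧ π p.2 < π p.1)).card

private lemma card_lt_val {n : ℕ} (a : Fin n) :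
    (univ.filter fun v : Fin n => v < a).card = (a : ℕ) := by
  have : (univ.filter fun v : Fin n => v < a) = Finset.Iio a := by
    ext v; simp
  rw [this, Fin.card_Iio]

private lemma card_perm_lt {n : ℕ} (π : Equiv.Perm (Fin n)) (i : Fin n) :
    (univ.filter fun j : Fin n => π j < π i).card = ((π i : Fin n) : ℕ) := by
  rw [← card_lt_val (π i)]
  apply Finset.card_bij (fun j _ => π j)
  · intro a ha; simp only [mem_filter, mem_univ, true_and] at ha ⊢; exact ha
  · intro a _ b _ h; exact π.injective h
  · intro b hb
    refine ⟨π⁻¹ b, ?_, by simp⟩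
    simp only [mem_filter, mem_univ, true_and] at hb ⊢
    simpa using hb

private lemma key_count {n : ℕ} (π : Equiv.Perm (Fin n)) (i : Fin n) :
    ((π i : Fin n) : ℕ) + (univ.filter fun j : Fin n => j < i ∧ π i < π j).card
      = (i : ℕ) + (univ.filter fun j : Fin n => i < j ∧ π j < π i).card := by
  have h1 : (univ.filter fun j : Fin n => π j < π i).card
      = (univ.filter fun j : Fin n => j < i ∧ π j < π i).card
        + (univ.filter fun j : Fin n => i < j ∧ π j < π i).card := by
    rw [← Finset.card_union_of_disjoint, ← Finset.filter_or]
    · apply congrArg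
      apply Finset.filter_congr
      intro j _
      constructor
      · intro h
        rcases lt_trichotomy j i with hj | hj | hj
        · exact Or.inl ⟨hj, h⟩
        · exact absurd (hj ▸ h) (lt_irrefl _)
        · exact Or.inr ⟨hj, h⟩
      · rintro (⟨_, h⟩ | ⟨_, h⟩) <;> exact h
    · rw [Finset.disjoint_left]
      rintro j hj hj'
      simp only [mem_filter] at hj hj'
      exact absurd (hj.2.1.trans hj'.2.1) (lt_irrefl _)
  have h2 : (univ.filter fun j : Fin n => j < i).card
      = (univ.filter fun j : Fin n => j < i ∧ π j < π i).card
        + (univ.filter fun j : Fin n => j < i ∧ π i < π j).card := by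
    rw [← Finset.card_union_of_disjoint, ← Finset.filter_or]
    · apply congrArg
      apply Finset.filter_congr
      intro j _
      constructor
      · intro h
        rcases lt_trichotomy (π j) (π i) with hj | hj | hj
        · exact Or.inl ⟨h, hj⟩
        · exact absurd (π.injective hj ▸ h) (lt_irrefl _)
        · exact Or.inr ⟨h, hj⟩
      · rintro (⟨h, _⟩ | ⟨h, _⟩) <;> exact h
    · rw [Finset.disjoint_left]
      rintro j hj hj'
      simp only [mem_filter] at hj hj'
      exact absurd (hj.2.2.trans hj'.2.2) (lt_irrefl _)
  have h3 := card_perm_lt π i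
  have h4 := card_lt_val i
  omega

theorem inv_eq_dexc_add_invE_add_invNE {n : ℕ} (π : Equiv.Perm (Fin n)) :
    inv π = dexc π + invE π + invNE π := by
  classical
  have hinv : inv π = ∑ i : Fin n, (univ.filter fun j : Fin n => i < j ∧ π j < π i).card := by
    rw [inv, Finset.card_filter, Fintype.sum_prod_type]
    exact Finset.sum_congr rfl fun i _ => (Finset.card_filter _ _).symm
  have hE : invE π = ∑ i : Fin n,
      (if i < π i then (univ.filter fun j : Fin n => j < i ∧ π i < π j).card else 0) := by
    rw [invE, Finset.card_filter, Fintype.sum_prod_type, Finset.sum_comm]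
    apply Finset.sum_congr rfl
    intro i _
    by_cases hi : i < π i
    · rw [if_pos hi, Finset.card_filter]
      apply Finset.sum_congr rfl
      intro j _
      congr 1
      simp only [eq_iff_iff]
      constructor
      · rintro ⟨h1, _, _, h4⟩; exact ⟨h1, h4⟩
      · rintro ⟨h1, h4⟩
        exact ⟨h1, lt_trans (lt_trans h1 hi) h4, hi, h4⟩
    · rw [if_neg hi]
      refine Finset.sum_eq_zero fun j _ => ?_
      simp only [ite_eq_right_iff]
      rintro ⟨_, _, h3, _⟩
      exact absurd h3 hi
  have hNE : invNE π = ∑ i : Fin n,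
      (if π i ≤ i then (univ.filter fun j : Fin n => i < j ∧ π j < π i).card else 0) := by
    rw [invNE, Finset.card_filter, Fintype.sum_prod_type]
    apply Finset.sum_congr rfl
    intro i _
    by_cases hi : π i ≤ i
    · rw [if_pos hi, Finset.card_filter]
      apply Finset.sum_congr rfl
      intro j _
      congr 1
      simp only [eq_iff_iff]
      constructor
      · rintro ⟨h1, _, _, h4⟩; exact ⟨h1, h4⟩
      · rintro ⟨h1, h4⟩
        exact ⟨h1, hi, le_of_lt (lt_trans (lt_of_lt_of_le h4 hi) h1), h4⟩
    · rw [if_neg hi]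
      refine Finset.sum_eq_zero fun j _ => ?_
      simp only [ite_eq_right_iff]
      rintro ⟨_, h2, _, _⟩
      exact absurd h2 hi
  have hd : dexc π = ∑ i : Fin n, (if i < π i then ((π i : ℕ) - (i : ℕ)) else 0) := by
    rw [dexc, Finset.sum_filter]
  rw [hinv, hE, hNE, hd, ← Finset.sum_add_distrib, ← Finset.sum_add_distrib]
  apply Finset.sum_congr rfl
  intro i _
  have hk := key_count π i
  by_cases hi : i < π i
  · rw [if_pos hi, if_pos hi, if_neg (not_le.mpr hi)]
    have : (i : ℕ) < (π i : ℕ) := hi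
    omega
  · rw [if_neg hi, if_neg hi, if_pos (not_lt.mp hi)]
    omega
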